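/- Suppose q_i(t) = T_k(At)Q_i, i = 1,...,n, with Q_i ∈ S^{k-1} ⊂ ℝᵏ (k = 2p), solves the curved n-body equations q̈_i = Σ_{j≠i} m_j (q_j − ⟨q_i,q_j⟩ q_i)/(1 − ⟨q_i,q_j⟩²)^{3/2} − ⟨q̇_i, q̇_i⟩ q_i. Then the configuration satisfies the algebraic system −𝐀²Q_i = Σ_{j≠i} m_j (Q_j − ⟨Q_i,Q_j⟩ Q_i)/(1 − ⟨Q_i,Q_j⟩²)^{3/2} − ‖𝐀Q_i‖² Q_i for each i. -/

import Mathlib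

open scoped RealInnerProductSpace

/-- The 2×2 rotation matrix `T(t)`. -/
noncomputable def rot (t : ℝ) : Matrix (Fin 2) (Fin 2) ℝ :=
  !![Real.cos t, -Real.sin t; Real.sin t, Real.cos t]
/-- The block-diagonal matrix `T_k(At)` with 2×2 rotation blocks `T(A_l t)`, `k = 2p`. -/
noncomputable def blockRot (p : ℕ) (A : Fin p → ℝ) (t : ℝ) :
    Matrix (Fin (2 * p)) (Fin (2 * p)) ℝ := fun i j =>
  if (i : ℕ) / 2 = (j : ℕ) / 2 then
    rot (A ⟨(i : ℕ) / 2, by have := i.isLt; omega⟩ * t)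
      ⟨(i : ℕ) % 2, by omega⟩ ⟨(j : ℕ) % 2, by omega⟩
  else 0
/-- The diagonal matrix `𝐀 = diag(A₁,A₁,...,A_p,A_p)`. -/
noncomputable def bigA (p : ℕ) (A : Fin p → ℝ) : Matrix (Fin (2 * p)) (Fin (2 * p)) ℝ :=
  Matrix.diagonal fun i => A ⟨(i : ℕ) / 2, by have := i.isLt; omega⟩
/-- Application of a matrix to a vector of Euclidean space. -/
noncomputable def apM {k : ℕ} (M : Matrix (Fin k) (Fin k) ℝ) (x : EuclideanSpace ℝ (Fin k)) :
    EuclideanSpace ℝ (Fin k) := WithLp.toLp 2 (M.mulVec x)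

noncomputable def rotD (t : ℝ) : Matrix (Fin 2) (Fin 2) ℝ :=
  !![-Real.sin t, -Real.cos t; Real.cos t, -Real.sin t]
noncomputable def blockRotD (p : ℕ) (A : Fin p → ℝ) (t : ℝ) :
    Matrix (Fin (2 * p)) (Fin (2 * p)) ℝ := fun i j =>
  if (i : ℕ) / 2 = (j : ℕ) / 2 then
    A ⟨(i : ℕ) / 2, by have := i.isLt; omega⟩ *
    rotD (A ⟨(i : ℕ) / 2, by have := i.isLt; omega⟩ * t)
      ⟨(i : ℕ) % 2, by omega⟩ ⟨(j : ℕ) % 2, by omega⟩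
  else 0
noncomputable def blockRotD2 (p : ℕ) (A : Fin p → ℝ) (t : ℝ) :
    Matrix (Fin (2 * p)) (Fin (2 * p)) ℝ := fun i j =>
  if (i : ℕ) / 2 = (j : ℕ) / 2 then
    -(A ⟨(i : ℕ) / 2, by have := i.isLt; omega⟩) ^ 2 *
    rot (A ⟨(i : ℕ) / 2, by have := i.isLt; omega⟩ * t)
      ⟨(i : ℕ) % 2, by omega⟩ ⟨(j : ℕ) % 2, by omega⟩
  else 0
lemma rot_hasDeriv (a t : ℝ) (b c : Fin 2) :
    HasDerivAt (fun s => rot (a * s) b c) (a * rotD (a * t) b c) t := by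
  have ha : HasDerivAt (fun s : ℝ => a * s) a t := by
    simpa using (hasDerivAt_id t).const_mul a
  fin_cases b <;> fin_cases c
  · show HasDerivAt (fun s => rot (a * s) 0 0) (a * rotD (a * t) 0 0) t
    rw [show (fun s => rot (a * s) 0 0) = fun s => Real.cos (a * s) by
        funext s; simp [rot],
      show a * rotD (a * t) 0 0 = -Real.sin (a * t) * a by simp [rotD]; ring]
    exact (Real.hasDerivAt_cos (a * t)).comp t ha
  · show HasDerivAt (fun s => rot (a * s) 0 1) (a * rotD (a * t) 0 1) t
    rw [show (fun s => rot (a * s) 0 1) = fun s => -Real.sin (a * s) by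
        funext s; simp [rot],
      show a * rotD (a * t) 0 1 = -(Real.cos (a * t) * a) by simp [rotD]; ring]
    exact ((Real.hasDerivAt_sin (a * t)).comp t ha).neg
  · show HasDerivAt (fun s => rot (a * s) 1 0) (a * rotD (a * t) 1 0) t
    rw [show (fun s => rot (a * s) 1 0) = fun s => Real.sin (a * s) by
        funext s; simp [rot],
      show a * rotD (a * t) 1 0 = Real.cos (a * t) * a by simp [rotD]; ring]
    exact (Real.hasDerivAt_sin (a * t)).comp t ha
  · show HasDerivAt (fun s => rot (a * s) 1 1) (a * rotD (a * t) 1 1) t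
    rw [show (fun s => rot (a * s) 1 1) = fun s => Real.cos (a * s) by
        funext s; simp [rot],
      show a * rotD (a * t) 1 1 = -Real.sin (a * t) * a by simp [rotD]; ring]
    exact (Real.hasDerivAt_cos (a * t)).comp t ha

lemma rotD_hasDeriv (a t : ℝ) (b c : Fin 2) :
    HasDerivAt (fun s => a * rotD (a * s) b c) (-(a ^ 2) * rot (a * t) b c) t := by
  have ha : HasDerivAt (fun s : ℝ => a * s) a t := by
    simpa using (hasDerivAt_id t).const_mul a
  fin_cases b <;> fin_cases c
  · show HasDerivAt (fun s => a * rotD (a * s) 0 0) (-(a ^ 2) * rot (a * t) 0 0) t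
    rw [show (fun s => a * rotD (a * s) 0 0) = fun s => a * -Real.sin (a * s) by
        funext s; simp [rotD],
      show -(a ^ 2) * rot (a * t) 0 0 = a * -(Real.cos (a * t) * a) by simp [rot]; ring]
    exact (((Real.hasDerivAt_sin (a * t)).comp t ha).neg).const_mul a
  · show HasDerivAt (fun s => a * rotD (a * s) 0 1) (-(a ^ 2) * rot (a * t) 0 1) t
    rw [show (fun s => a * rotD (a * s) 0 1) = fun s => a * -Real.cos (a * s) by
        funext s; simp [rotD],
      show -(a ^ 2) * rot (a * t) 0 1 = a * -(-Real.sin (a * t) * a) by simp [rot]; ring]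
    exact (((Real.hasDerivAt_cos (a * t)).comp t ha).neg).const_mul a
  · show HasDerivAt (fun s => a * rotD (a * s) 1 0) (-(a ^ 2) * rot (a * t) 1 0) t
    rw [show (fun s => a * rotD (a * s) 1 0) = fun s => a * Real.cos (a * s) by
        funext s; simp [rotD],
      show -(a ^ 2) * rot (a * t) 1 0 = a * (-Real.sin (a * t) * a) by simp [rot]; ring]
    exact ((Real.hasDerivAt_cos (a * t)).comp t ha).const_mul a
  · show HasDerivAt (fun s => a * rotD (a * s) 1 1) (-(a ^ 2) * rot (a * t) 1 1) t
    rw [show (fun s => a * rotD (a * s) 1 1) = fun s => a * -Real.sin (a * s) by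
        funext s; simp [rotD],
      show -(a ^ 2) * rot (a * t) 1 1 = a * -(Real.cos (a * t) * a) by simp [rot]; ring]
    exact (((Real.hasDerivAt_sin (a * t)).comp t ha).neg).const_mul a


lemma hasDerivAt_apM {k : ℕ} (M M' : ℝ → Matrix (Fin k) (Fin k) ℝ)
    (x : EuclideanSpace ℝ (Fin k)) (t : ℝ)
    (h : ∀ i j, HasDerivAt (fun s => M s i j) (M' t i j) t) :
    HasDerivAt (fun s => apM (M s) x) (apM (M' t) x) t := by
  have hpi : HasDerivAt (fun s => (fun i => (M s).mulVec x i)) (fun i => (M' t).mulVec x i) t := by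
    rw [hasDerivAt_pi]
    intro i
    simpa [Matrix.mulVec, dotProduct] using
      HasDerivAt.fun_sum (fun j _ => (h i j).mul_const (x j))
  exact ((PiLp.continuousLinearEquiv 2 ℝ
    (fun _ : Fin k => ℝ)).symm.toContinuousLinearMap.hasFDerivAt.comp_hasDerivAt t hpi)

lemma blockRot_hasDeriv (p : ℕ) (A : Fin p → ℝ) (t : ℝ) (i j : Fin (2 * p)) :
    HasDerivAt (fun s => blockRot p A s i j) (blockRotD p A t i j) t := by
  unfold blockRot blockRotD
  by_cases hij : (i : ℕ) / 2 = (j : ℕ) / 2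
  · simp only [if_pos hij]
    exact rot_hasDeriv _ t _ _
  · simp only [if_neg hij]
    exact hasDerivAt_const t 0

lemma blockRotD_hasDeriv (p : ℕ) (A : Fin p → ℝ) (t : ℝ) (i j : Fin (2 * p)) :
    HasDerivAt (fun s => blockRotD p A s i j) (blockRotD2 p A t i j) t := by
  unfold blockRotD blockRotD2
  by_cases hij : (i : ℕ) / 2 = (j : ℕ) / 2
  · simp only [if_pos hij]
    exact rotD_hasDeriv _ t _ _
  · simp only [if_neg hij]
    exact hasDerivAt_const t 0

lemma blockRot_zero (p : ℕ) (A : Fin p → ℝ) : blockRot p A 0 = 1 := by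
  funext i j
  unfold blockRot
  by_cases hij : (i : ℕ) / 2 = (j : ℕ) / 2
  · rw [if_pos hij]
    by_cases hmod : (i : ℕ) % 2 = (j : ℕ) % 2
    · have hij' : i = j := Fin.ext (by omega)
      subst hij'
      rcases (by omega : (i : ℕ) % 2 = 0 ∨ (i : ℕ) % 2 = 1) with h | h <;>
        simp [h, rot, Matrix.one_apply]
    · have hne : i ≠ j := fun h => hmod (by rw [h])
      rcases (by omega : ((i:ℕ)%2 = 0 ∧ (j:ℕ)%2 = 1) ∨ ((i:ℕ)%2 = 1 ∧ (j:ℕ)%2 = 0)) with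
        ⟨h1, h2⟩ | ⟨h1, h2⟩ <;> simp [h1, h2, rot, Matrix.one_apply, hne]
  · rw [if_neg hij]
    have hne : i ≠ j := fun h => hij (by rw [h])
    simp [Matrix.one_apply, hne]

lemma blockRotD2_zero (p : ℕ) (A : Fin p → ℝ) : blockRotD2 p A 0 = -(bigA p A ^ 2) := by
  have hsq : bigA p A ^ 2 =
      Matrix.diagonal fun i : Fin (2*p) => (A ⟨(i : ℕ) / 2, by have := i.isLt; omega⟩) ^ 2 := by
    rw [pow_two, bigA, Matrix.diagonal_mul_diagonal]
    congr 1
    funext i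
    ring
  funext i j
  rw [hsq]
  unfold blockRotD2
  by_cases hij : (i : ℕ) / 2 = (j : ℕ) / 2
  · rw [if_pos hij]
    by_cases hmod : (i : ℕ) % 2 = (j : ℕ) % 2
    · have hij' : i = j := Fin.ext (by omega)
      subst hij'
      rcases (by omega : (i : ℕ) % 2 = 0 ∨ (i : ℕ) % 2 = 1) with h | h <;>
        simp [h, rot, Matrix.diagonal_apply_eq]
    · have hne : i ≠ j := fun h => hmod (by rw [h])
      rcases (by omega : ((i:ℕ)%2 = 0 ∧ (j:ℕ)%2 = 1) ∨ ((i:ℕ)%2 = 1 ∧ (j:ℕ)%2 = 0)) with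
        ⟨h1, h2⟩ | ⟨h1, h2⟩ <;> simp [h1, h2, rot, Matrix.diagonal_apply_ne _ hne]
  · rw [if_neg hij]
    have hne : i ≠ j := fun h => hij (by rw [h])
    simp [Matrix.diagonal_apply_ne _ hne]

/-- the partner index inside each 2×2 block -/
def partner (p : ℕ) (i : Fin (2 * p)) : Fin (2 * p) :=
  ⟨2 * ((i : ℕ) / 2) + (1 - (i : ℕ) % 2), by have := i.isLt; omega⟩

lemma partner_invol (p : ℕ) : Function.Involutive (partner p) := by
  intro i
  unfold partner
  apply Fin.ext
  simp only []
  omega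

lemma mulVecD (p : ℕ) (A : Fin p → ℝ) (x : EuclideanSpace ℝ (Fin (2 * p))) (i : Fin (2 * p)) :
    (blockRotD p A 0).mulVec x i =
      (if (i : ℕ) % 2 = 0 then -1 else 1) *
        A ⟨(i : ℕ) / 2, by have := i.isLt; omega⟩ * x (partner p i) := by
  have hent : blockRotD p A 0 i (partner p i) =
      (if (i : ℕ) % 2 = 0 then -1 else 1) * A ⟨(i : ℕ) / 2, by have := i.isLt; omega⟩ := by
    unfold blockRotD partner
    rcases (by omega : (i : ℕ) % 2 = 0 ∨ (i : ℕ) % 2 = 1) with h | h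
    · have hm : (2 * ((i:ℕ)/2) + (1 - (i:ℕ)%2)) % 2 = 1 := by omega
      rw [if_pos (show (i:ℕ)/2 = (2 * ((i:ℕ)/2) + (1 - (i:ℕ)%2))/2 by omega)]
      simp only [hm, Fin.mk_one]
      simp only [h, Fin.mk_zero]
      norm_num [rotD]
    · have hm : (2 * ((i:ℕ)/2) + (1 - (i:ℕ)%2)) % 2 = 0 := by omega
      rw [if_pos (show (i:ℕ)/2 = (2 * ((i:ℕ)/2) + (1 - (i:ℕ)%2))/2 by omega)]
      simp only [hm, Fin.mk_zero]
      simp only [h, Fin.mk_one]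
      norm_num [rotD]
  have : (blockRotD p A 0).mulVec x i = blockRotD p A 0 i (partner p i) * x (partner p i) := by
    unfold Matrix.mulVec dotProduct
    apply Finset.sum_eq_single
    · intro j _ hj
      suffices h : blockRotD p A 0 i j = 0 by simp [h]
      unfold blockRotD
      by_cases hij : (i : ℕ) / 2 = (j : ℕ) / 2
      · rw [if_pos hij]
        have hval : (j : ℕ) ≠ 2 * ((i:ℕ)/2) + (1 - (i:ℕ)%2) := by
          intro h; exact hj (Fin.ext h)
        have hmod : (i : ℕ) % 2 = (j : ℕ) % 2 := by omega
        rcases (by omega : (i : ℕ) % 2 = 0 ∨ (i : ℕ) % 2 = 1) with h | h <;>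
          simp [← hmod, h, rotD]
      · rw [if_neg hij]
    · intro h; exact absurd (Finset.mem_univ _) h
  rw [this, hent]

lemma innerD_eq (p : ℕ) (A : Fin p → ℝ) (x : EuclideanSpace ℝ (Fin (2 * p))) :
    ⟪apM (blockRotD p A 0) x, apM (blockRotD p A 0) x⟫ = ‖apM (bigA p A) x‖ ^ 2 := by
  rw [← real_inner_self_eq_norm_sq]
  simp only [apM, PiLp.inner_apply, RCLike.inner_apply, conj_trivial]
  have key : ∀ i : Fin (2 * p),
      (blockRotD p A 0).mulVec x i * (blockRotD p A 0).mulVec x i =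
      (fun j => (bigA p A).mulVec x j * (bigA p A).mulVec x j) (partner p i) := by
    intro i
    rw [mulVecD]
    simp only [bigA, Matrix.mulVec_diagonal]
    have hidx : A ⟨((partner p i : Fin (2*p)) : ℕ) / 2, by
          have := (partner p i).isLt; omega⟩ =
        A ⟨(i : ℕ) / 2, by have := i.isLt; omega⟩ := by
      congr 1
      apply Fin.ext
      simp only [partner]
      omega
    rw [hidx]
    rcases (by omega : (i : ℕ) % 2 = 0 ∨ (i : ℕ) % 2 = 1) with h | h <;> simp [h] <;> ring
  set g : Fin (2 * p) → ℝ := fun j => (bigA p A).mulVec x j * (bigA p A).mulVec x j with hg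
  have h1 : ∑ i, (blockRotD p A 0).mulVec x i * (blockRotD p A 0).mulVec x i
      = ∑ i, g (partner p i) := Finset.sum_congr rfl fun i _ => key i
  have h2 : ∑ i, g (partner p i) = ∑ i, g i :=
    Fintype.sum_equiv (Function.Involutive.toPerm _ (partner_invol p)) _ g fun i => rfl
  rw [h1, h2]

/-- If `q_i(t) = T_k(At) Q_i` solves the curved `n`-body equations, then the configuration
`Q_1, ..., Q_n` satisfies the algebraic relative-equilibrium system. -/
theorem relEq_of_solution (p n : ℕ) (A : Fin p → ℝ) (m : Fin n → ℝ)
    (Q : Fin n → EuclideanSpace ℝ (Fin (2 * p)))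
    (hm : ∀ j, 0 < m j) (hQ : ∀ i, ‖Q i‖ = 1)
    (hsep : ∀ i j, i ≠ j → ⟪Q i, Q j⟫ ^ 2 ≠ 1)
    (hsol : ∀ (i : Fin n) (t : ℝ),
      deriv (deriv (fun s => apM (blockRot p A s) (Q i))) t =
        (∑ j ∈ Finset.univ.erase i,
          (m j / (1 - ⟪apM (blockRot p A t) (Q i), apM (blockRot p A t) (Q j)⟫ ^ 2)
              ^ ((3 : ℝ) / 2)) •
            (apM (blockRot p A t) (Q j) -
              ⟪apM (blockRot p A t) (Q i), apM (blockRot p A t) (Q j)⟫ •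
                apM (blockRot p A t) (Q i)))
        - ⟪deriv (fun s => apM (blockRot p A s) (Q i)) t,
            deriv (fun s => apM (blockRot p A s) (Q i)) t⟫ • apM (blockRot p A t) (Q i)) :
    ∀ i : Fin n,
      -apM (bigA p A ^ 2) (Q i) =
        (∑ j ∈ Finset.univ.erase i,
          (m j / (1 - ⟪Q i, Q j⟫ ^ 2) ^ ((3 : ℝ) / 2)) • (Q j - ⟪Q i, Q j⟫ • Q i))
        - ‖apM (bigA p A) (Q i)‖ ^ 2 • Q i := by
  intro i
  have hd1 : ∀ t : ℝ, HasDerivAt (fun s => apM (blockRot p A s) (Q i))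
      (apM (blockRotD p A t) (Q i)) t :=
    fun t => hasDerivAt_apM _ (fun t => blockRotD p A t) (Q i) t
      (fun a b => blockRot_hasDeriv p A t a b)
  have hD1 : deriv (fun s => apM (blockRot p A s) (Q i))
      = fun t => apM (blockRotD p A t) (Q i) := funext fun t => (hd1 t).deriv
  have hD2 : deriv (fun t => apM (blockRotD p A t) (Q i)) 0 = apM (blockRotD2 p A 0) (Q i) :=
    (hasDerivAt_apM _ (fun t => blockRotD2 p A t) (Q i) 0
      (fun a b => blockRotD_hasDeriv p A 0 a b)).deriv
  have hone : ∀ x : EuclideanSpace ℝ (Fin (2 * p)), apM (1 : Matrix _ _ ℝ) x = x := by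
    intro x
    show WithLp.toLp 2 (Matrix.mulVec 1 x.ofLp) = x
    rw [Matrix.one_mulVec]
  have h0 := hsol i 0
  simp only [hD1] at h0
  rw [hD2, blockRotD2_zero] at h0
  rw [blockRot_zero] at h0
  simp only [hone] at h0
  rw [innerD_eq] at h0
  have hneg : apM (-(bigA p A ^ 2)) (Q i) = -apM (bigA p A ^ 2) (Q i) := by
    show WithLp.toLp 2 (Matrix.mulVec _ _) = -WithLp.toLp 2 (Matrix.mulVec _ _)
    rw [Matrix.neg_mulVec, WithLp.toLp_neg]
  rw [hneg] at h0
  exact h0
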